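/- (Second-order mean value theorem) Let X be a Banach space, D ⊆ X open, and f ∈ C^{1,1}(D). For every a, b ∈ D with the segment [a, b] contained in D, there exist ξ in the open segment (a, b) and L ∈ ∂²f(ξ)(b−a) such that f(b) − f(a) − ⟨f'(a), b−a⟩ = ½⟨L, b−a⟩. -/

import Mathlib

open Filter Set

/-- The Clarke generalized directional derivative of `g` at `x₀` in direction `h`. -/
noncomputable def clarkeDeriv {X : Type*} [NormedAddCommGroup X] [NormedSpace ℝ X]
    (g : X → ℝ) (x₀ h : X) : ℝ :=
  Filter.limsup (fun p : X × ℝ => (g (p.1 + p.2 • h) - g p.1) / p.2)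
    ((nhds x₀) ×ˢ (nhdsWithin 0 (Set.Ioi 0)))

/-- The Clarke subdifferential of `g` at `x₀`. -/
def clarkeSubdiff {X : Type*} [NormedAddCommGroup X] [NormedSpace ℝ X]
    (g : X → ℝ) (x₀ : X) : Set (X →L[ℝ] ℝ) :=
  {L | ∀ h, L h ≤ clarkeDeriv g x₀ h}

/-- `f'` is the Gâteaux derivative of `f` on `D`. -/
def IsGateauxDerivOn {X E : Type*} [NormedAddCommGroup X] [NormedSpace ℝ X]
    [NormedAddCommGroup E] [NormedSpace ℝ E]
    (f : X → E) (f' : X → X →L[ℝ] E) (D : Set X) : Prop :=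
  ∀ x ∈ D, ∀ h : X, HasDerivAt (fun t : ℝ => f (x + t • h)) (f' x h) 0

/-- `g` is locally Lipschitz on the set `D`. -/
def LocallyLipschitzOnSet {X E : Type*} [NormedAddCommGroup X] [NormedSpace ℝ X]
    [NormedAddCommGroup E] (g : X → E) (D : Set X) : Prop :=
  ∀ x ∈ D, ∃ ε > 0, ∃ K : NNReal, LipschitzOnWith K g (Metric.ball x ε ∩ D)

/-- `f` is of class `C^{1,1}` on `D`, witnessed by its Gâteaux derivative `f'`. -/
def IsC11On {X : Type*} [NormedAddCommGroup X] [NormedSpace ℝ X]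
    (f : X → ℝ) (f' : X → X →L[ℝ] ℝ) (D : Set X) : Prop :=
  IsGateauxDerivOn f f' D ∧ LocallyLipschitzOnSet f' D

set_option linter.unusedSectionVars false
section Aux

variable {X : Type*} [NormedAddCommGroup X] [NormedSpace ℝ X]

/-- difference quotient -/
noncomputable def dq (ψ : X → ℝ) (h : X) (p : X × ℝ) : ℝ := (ψ (p.1 + p.2 • h) - ψ p.1) / p.2

/-- the filter -/
def Fil (ξ : X) : Filter (X × ℝ) := (nhds ξ) ×ˢ (nhdsWithin 0 (Set.Ioi 0))

instance (ξ : X) : (Fil ξ).NeBot := by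
  unfold Fil; infer_instance

theorem clarkeDeriv_eq (ψ : X → ℝ) (ξ h : X) :
    clarkeDeriv ψ ξ h = limsup (dq ψ h) (Fil ξ) := rfl

variable {ψ : X → ℝ} {ξ : X} {ε M : ℝ}

theorem Fil_pos (ξ : X) : ∀ᶠ p in Fil ξ, (0:ℝ) < p.2 := by
  have : ∀ᶠ l in nhdsWithin (0:ℝ) (Set.Ioi 0), 0 < l := self_mem_nhdsWithin
  exact this.prod_inr _

theorem tendsto_shift (ξ : X) (h₂ : X) :
    Tendsto (fun p : X × ℝ => (p.1 + p.2 • h₂, p.2)) (Fil ξ) (Fil ξ) := by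
  refine Tendsto.prodMk ?_ tendsto_snd
  have h1 : Tendsto (fun p : X × ℝ => p.1) (Fil ξ) (nhds ξ) := tendsto_fst
  have h2 : Tendsto (fun p : X × ℝ => p.2) (Fil ξ) (nhds (0:ℝ)) :=
    tendsto_snd.mono_right nhdsWithin_le_nhds
  have := h1.add (h2.smul_const h₂)
  simpa using this

theorem limsup_comp_le {α : Type*} {F : Filter α} {m : α → α} (hm : Tendsto m F F)
    {u : α → ℝ} (hco : IsCoboundedUnder (· ≤ ·) F (u ∘ m))
    (hb : IsBoundedUnder (· ≤ ·) F u) :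
    limsup (u ∘ m) F ≤ limsup u F := by
  have e : map u (map m F) = map (u ∘ m) F := Filter.map_map
  have h1 : limsup u (map m F) = limsup (u ∘ m) F := by
    rw [Filter.limsup, Filter.limsup, e]
  rw [← h1]
  refine limsup_le_limsup_of_le hm ?_ hb
  show IsCobounded _ _
  rw [e]
  exact hco

theorem dq_add_eq (ξ' : X) (ψ : X → ℝ) (h₁ h₂ : X) :
    ∀ᶠ p in Fil ξ', dq ψ (h₁ + h₂) p =
      (dq ψ h₁ ∘ fun p : X × ℝ => (p.1 + p.2 • h₂, p.2)) p + dq ψ h₂ p := by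
  filter_upwards [Fil_pos ξ'] with p hp
  have e1 : p.1 + p.2 • (h₁ + h₂) = p.1 + p.2 • h₂ + p.2 • h₁ := by
    rw [smul_add]; abel
  simp only [dq, Function.comp_apply, e1]
  rw [← add_div, sub_add_sub_cancel]

theorem dq_bound (hε : 0 < ε)
    (hLip : ∀ x ∈ Metric.ball ξ ε, ∀ y ∈ Metric.ball ξ ε, |ψ x - ψ y| ≤ M * ‖x - y‖)
    (h : X) : ∀ᶠ p in Fil ξ, |dq ψ h p| ≤ M * ‖h‖ := by
  obtain ⟨δ, hδ, hδh⟩ : ∃ δ > 0, δ * ‖h‖ < ε / 2 := by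
    rcases eq_or_ne h 0 with rfl | hh
    · exact ⟨1, one_pos, by simpa using half_pos hε⟩
    · refine ⟨ε / (2 * (‖h‖ + 1)), by positivity, ?_⟩
      rw [div_mul_eq_mul_div, div_lt_iff₀ (by positivity)]
      have : (0:ℝ) < ‖h‖ + 1 := by positivity
      nlinarith [norm_nonneg h]
  have h1 : ∀ᶠ x in nhds ξ, x ∈ Metric.ball ξ (ε / 2) :=
    Metric.ball_mem_nhds ξ (half_pos hε)
  have h2 : ∀ᶠ l in nhdsWithin (0:ℝ) (Set.Ioi 0), l ∈ Set.Ioo 0 δ := by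
    filter_upwards [Ioo_mem_nhdsGT_of_mem (Set.left_mem_Ico.2 hδ), self_mem_nhdsWithin]
      with l hl _
    exact hl
  filter_upwards [h1.prod_mk h2] with p hp
  obtain ⟨hx, hl⟩ := hp
  have hl0 : (0:ℝ) < p.2 := hl.1
  have hx2 : p.1 + p.2 • h ∈ Metric.ball ξ ε := by
    have : dist (p.1 + p.2 • h) ξ ≤ dist p.1 ξ + ‖p.2 • h‖ := by
      calc dist (p.1 + p.2 • h) ξ ≤ dist (p.1 + p.2 • h) p.1 + dist p.1 ξ := dist_triangle _ _ _
      _ = ‖p.2 • h‖ + dist p.1 ξ := by rw [dist_eq_norm, add_sub_cancel_left]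
      _ = _ := by exact add_comm _ _
    have h3 : ‖p.2 • h‖ ≤ δ * ‖h‖ := by
      rw [norm_smul, Real.norm_eq_abs, abs_of_pos hl0]
      exact mul_le_mul_of_nonneg_right hl.2.le (norm_nonneg _)
    have := Metric.mem_ball.1 hx
    exact Metric.mem_ball.2 (by linarith)
  have hx1 : p.1 ∈ Metric.ball ξ ε :=
    Metric.mem_ball.2 (lt_trans (Metric.mem_ball.1 hx) (by linarith))
  have := hLip _ hx2 _ hx1
  show |(ψ (p.1 + p.2 • h) - ψ p.1) / p.2| ≤ M * ‖h‖
  rw [abs_div, abs_of_pos hl0, div_le_iff₀ hl0]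
  calc |ψ (p.1 + p.2 • h) - ψ p.1| ≤ M * ‖p.1 + p.2 • h - p.1‖ := this
    _ = M * (p.2 * ‖h‖) := by rw [add_sub_cancel_left, norm_smul, Real.norm_eq_abs,
        abs_of_pos hl0]
    _ = M * ‖h‖ * p.2 := by ring

theorem dq_bddUnder_le (hε : 0 < ε)
    (hLip : ∀ x ∈ Metric.ball ξ ε, ∀ y ∈ Metric.ball ξ ε, |ψ x - ψ y| ≤ M * ‖x - y‖)
    (h : X) : IsBoundedUnder (· ≤ ·) (Fil ξ) (dq ψ h) :=
  ⟨M * ‖h‖, eventually_map.mpr <| (dq_bound hε hLip h).mono fun _ hp => (abs_le.1 hp).2⟩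

theorem dq_bddUnder_ge (hε : 0 < ε)
    (hLip : ∀ x ∈ Metric.ball ξ ε, ∀ y ∈ Metric.ball ξ ε, |ψ x - ψ y| ≤ M * ‖x - y‖)
    (h : X) : IsBoundedUnder (· ≥ ·) (Fil ξ) (dq ψ h) :=
  ⟨-(M * ‖h‖), eventually_map.mpr <| (dq_bound hε hLip h).mono fun _ hp => (abs_le.1 hp).1⟩

theorem dq_cobddUnder_le (hε : 0 < ε)
    (hLip : ∀ x ∈ Metric.ball ξ ε, ∀ y ∈ Metric.ball ξ ε, |ψ x - ψ y| ≤ M * ‖x - y‖)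
    (h : X) : IsCoboundedUnder (· ≤ ·) (Fil ξ) (dq ψ h) :=
  (dq_bddUnder_ge hε hLip h).isCoboundedUnder_le

theorem clarkeDeriv_le (hε : 0 < ε)
    (hLip : ∀ x ∈ Metric.ball ξ ε, ∀ y ∈ Metric.ball ξ ε, |ψ x - ψ y| ≤ M * ‖x - y‖)
    (h : X) : clarkeDeriv ψ ξ h ≤ M * ‖h‖ := by
  rw [clarkeDeriv_eq]
  exact limsup_le_of_le (dq_cobddUnder_le hε hLip h)
    ((dq_bound hε hLip h).mono fun _ hp => (abs_le.1 hp).2)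

/-- lower bound along a curve -/
theorem le_clarkeDeriv_of_curve (hε : 0 < ε)
    (hLip : ∀ x ∈ Metric.ball ξ ε, ∀ y ∈ Metric.ball ξ ε, |ψ x - ψ y| ≤ M * ‖x - y‖)
    (h : X) {m : ℝ → X × ℝ} (hm : Tendsto m (nhdsWithin 0 (Set.Ioi 0)) (Fil ξ))
    {s : ℝ} (hs : ∀ᶠ l in nhdsWithin 0 (Set.Ioi 0), s ≤ dq ψ h (m l)) :
    s ≤ clarkeDeriv ψ ξ h := by
  rw [clarkeDeriv_eq]
  exact le_limsup_of_frequently_le (hm.frequently hs.frequently) (dq_bddUnder_le hε hLip h)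

theorem clarkeDeriv_add_le (hε : 0 < ε)
    (hLip : ∀ x ∈ Metric.ball ξ ε, ∀ y ∈ Metric.ball ξ ε, |ψ x - ψ y| ≤ M * ‖x - y‖)
    (h₁ h₂ : X) :
    clarkeDeriv ψ ξ (h₁ + h₂) ≤ clarkeDeriv ψ ξ h₁ + clarkeDeriv ψ ξ h₂ := by
  set m : X × ℝ → X × ℝ := fun p => (p.1 + p.2 • h₂, p.2) with hm_def
  have hm : Tendsto m (Fil ξ) (Fil ξ) := tendsto_shift ξ h₂
  set v : X × ℝ → ℝ := dq ψ h₁ ∘ m with hv_def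
  have hvb : ∀ᶠ p in Fil ξ, |v p| ≤ M * ‖h₁‖ := hm.eventually (dq_bound hε hLip h₁)
  have hvb_le : IsBoundedUnder (· ≤ ·) (Fil ξ) v :=
    ⟨M * ‖h₁‖, eventually_map.mpr <| hvb.mono fun _ hp => (abs_le.1 hp).2⟩
  have hvb_ge : IsBoundedUnder (· ≥ ·) (Fil ξ) v :=
    ⟨-(M * ‖h₁‖), eventually_map.mpr <| hvb.mono fun _ hp => (abs_le.1 hp).1⟩
  have hvco : IsCoboundedUnder (· ≤ ·) (Fil ξ) v := hvb_ge.isCoboundedUnder_le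
  rw [clarkeDeriv_eq, clarkeDeriv_eq, clarkeDeriv_eq]
  calc limsup (dq ψ (h₁ + h₂)) (Fil ξ) = limsup (v + dq ψ h₂) (Fil ξ) :=
        limsup_congr (dq_add_eq ξ ψ h₁ h₂)
    _ ≤ limsup v (Fil ξ) + limsup (dq ψ h₂) (Fil ξ) :=
        limsup_add_le hvb_ge hvb_le (dq_cobddUnder_le hε hLip h₂) (dq_bddUnder_le hε hLip h₂)
    _ ≤ _ := by
        gcongr ?_ + _
        exact limsup_comp_le hm hvco (dq_bddUnder_le hε hLip h₁)

theorem clarkeDeriv_smul_le (hε : 0 < ε)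
    (hLip : ∀ x ∈ Metric.ball ξ ε, ∀ y ∈ Metric.ball ξ ε, |ψ x - ψ y| ≤ M * ‖x - y‖)
    {c : ℝ} (hc : 0 < c) (h : X) :
    clarkeDeriv ψ ξ (c • h) ≤ c * clarkeDeriv ψ ξ h := by
  set m : X × ℝ → X × ℝ := fun p => (p.1, c * p.2) with hm_def
  have hm : Tendsto m (Fil ξ) (Fil ξ) := by
    refine Tendsto.prodMk tendsto_fst ?_
    have h2 : Tendsto (fun l : ℝ => c * l) (nhdsWithin 0 (Set.Ioi 0))
        (nhdsWithin 0 (Set.Ioi 0)) := by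
      have hco : ContinuousWithinAt (fun l : ℝ => c * l) (Set.Ioi 0) 0 :=
        (continuous_const.mul continuous_id).continuousWithinAt
      have := hco.tendsto_nhdsWithin (fun l hl => by
        exact Set.mem_Ioi.2 (mul_pos hc (Set.mem_Ioi.1 hl)))
      simpa using this
    exact h2.comp tendsto_snd
  set w : X × ℝ → ℝ := dq ψ h ∘ m with hw_def
  have hwb : ∀ᶠ p in Fil ξ, |w p| ≤ M * ‖h‖ := hm.eventually (dq_bound hε hLip h)
  have hwb_le : IsBoundedUnder (· ≤ ·) (Fil ξ) w :=
    ⟨M * ‖h‖, eventually_map.mpr <| hwb.mono fun _ hp => (abs_le.1 hp).2⟩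
  have hwb_ge : IsBoundedUnder (· ≥ ·) (Fil ξ) w :=
    ⟨-(M * ‖h‖), eventually_map.mpr <| hwb.mono fun _ hp => (abs_le.1 hp).1⟩
  have hwco : IsCoboundedUnder (· ≤ ·) (Fil ξ) w := hwb_ge.isCoboundedUnder_le
  have hcwb_le : IsBoundedUnder (· ≤ ·) (Fil ξ) (fun p => c * w p) :=
    ⟨c * (M * ‖h‖), eventually_map.mpr <| hwb.mono fun _ hp =>
      mul_le_mul_of_nonneg_left (abs_le.1 hp).2 hc.le⟩
  have hcwb_ge : IsBoundedUnder (· ≥ ·) (Fil ξ) (fun p => c * w p) :=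
    ⟨c * (-(M * ‖h‖)), eventually_map.mpr <| hwb.mono fun _ hp =>
      mul_le_mul_of_nonneg_left (abs_le.1 hp).1 hc.le⟩
  have hcwco : IsCoboundedUnder (· ≤ ·) (Fil ξ) (fun p => c * w p) :=
    hcwb_ge.isCoboundedUnder_le
  have heq : ∀ᶠ p in Fil ξ, dq ψ (c • h) p = c * w p := by
    filter_upwards [Fil_pos ξ] with p hp
    have e1 : p.1 + p.2 • (c • h) = p.1 + (c * p.2) • h := by
      rw [smul_smul, mul_comm]
    show (ψ (p.1 + p.2 • (c • h)) - ψ p.1) / p.2 =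
      c * ((ψ (p.1 + (c * p.2) • h) - ψ p.1) / (c * p.2))
    rw [e1]
    field_simp
  have hOI := (OrderIso.mulLeft₀ c hc).limsup_apply (f := Fil ξ) (u := w)
    hwb_le hwco hcwb_le hcwco
  rw [clarkeDeriv_eq, clarkeDeriv_eq, limsup_congr heq]
  have : limsup (fun p => c * w p) (Fil ξ) = c * limsup w (Fil ξ) := by
    simp only [OrderIso.mulLeft₀_apply] at hOI
    exact hOI.symm
  rw [this]
  exact mul_le_mul_of_nonneg_left (limsup_comp_le hm hwco (dq_bddUnder_le hε hLip h)) hc.le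

theorem clarkeDeriv_smul (hε : 0 < ε)
    (hLip : ∀ x ∈ Metric.ball ξ ε, ∀ y ∈ Metric.ball ξ ε, |ψ x - ψ y| ≤ M * ‖x - y‖)
    {c : ℝ} (hc : 0 < c) (h : X) :
    clarkeDeriv ψ ξ (c • h) = c * clarkeDeriv ψ ξ h := by
  refine le_antisymm (clarkeDeriv_smul_le hε hLip hc h) ?_
  have h2 := clarkeDeriv_smul_le hε hLip (inv_pos.2 hc) (c • h)
  rw [inv_smul_smul₀ hc.ne'] at h2
  calc c * clarkeDeriv ψ ξ h ≤ c * (c⁻¹ * clarkeDeriv ψ ξ (c • h)) :=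
        mul_le_mul_of_nonneg_left h2 hc.le
    _ = clarkeDeriv ψ ξ (c • h) := by field_simp

theorem exists_clarke_elem (hε : 0 < ε) (hM : 0 ≤ M)
    (hLip : ∀ x ∈ Metric.ball ξ ε, ∀ y ∈ Metric.ball ξ ε, |ψ x - ψ y| ≤ M * ‖x - y‖)
    {d : X} (hd : d ≠ 0) {s : ℝ} (hs₁ : s ≤ clarkeDeriv ψ ξ d)
    (hs₂ : -s ≤ clarkeDeriv ψ ξ (-d)) :
    ∃ L ∈ clarkeSubdiff ψ ξ, L d = s := by
  set N : X → ℝ := clarkeDeriv ψ ξ with hN_def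
  have hN_hom : ∀ c : ℝ, 0 < c → ∀ x, N (c • x) = c * N x :=
    fun c hc x => clarkeDeriv_smul hε hLip hc x
  have hN_add : ∀ x y, N (x + y) ≤ N x + N y := fun x y =>
    clarkeDeriv_add_le hε hLip x y
  have hN_le : ∀ h, N h ≤ M * ‖h‖ := fun h => clarkeDeriv_le hε hLip h
  set f₀ := LinearPMap.mkSpanSingleton (K := ℝ) (σ := RingHom.id ℝ) d s hd with hf₀_def
  have hfle : ∀ z : f₀.domain, f₀ z ≤ N z.1 := by
    rintro ⟨z, hz⟩
    obtain ⟨α, hα⟩ := Submodule.mem_span_singleton.1 hz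
    subst hα
    have happ : f₀ ⟨α • d, hz⟩ = α • s := LinearPMap.mkSpanSingleton'_apply _ _ _ α _
    rw [happ]
    show α • s ≤ N (α • d)
    rcases lt_trichotomy α 0 with hα0 | hα0 | hα0
    · have e1 : α • d = (-α) • (-d) := by rw [smul_neg, neg_smul, neg_neg]
      rw [e1, hN_hom (-α) (by linarith) (-d)]
      have := mul_le_mul_of_nonneg_left hs₂ (by linarith : (0:ℝ) ≤ -α)
      simp only [smul_eq_mul]
      nlinarith
    · subst hα0
      simp only [zero_smul, smul_eq_mul, zero_mul]
      have hN0 : N (0 : X) = 0 := by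
        have : dq ψ (0 : X) = fun _ => (0:ℝ) := by
          funext p; simp [dq]
        rw [hN_def, clarkeDeriv_eq, this, limsup_const]
      rw [hN0]
    · rw [hN_hom α hα0 d]
      simp only [smul_eq_mul]
      nlinarith
  obtain ⟨g, hg_ext, hg_le⟩ := exists_extension_of_le_sublinear f₀ N hN_hom hN_add hfle
  have hgd : g d = s := by
    have := hg_ext ⟨d, Submodule.mem_span_singleton_self d⟩
    rw [this, LinearPMap.mkSpanSingleton_apply]
  have hbound : ∀ x, ‖g x‖ ≤ M * ‖x‖ := by
    intro x
    rw [Real.norm_eq_abs, abs_le]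
    constructor
    · have h1 := (hg_le (-x)).trans (hN_le (-x))
      rw [map_neg, norm_neg] at h1
      linarith
    · exact (hg_le x).trans (hN_le x)
  refine ⟨LinearMap.mkContinuous g M hbound, fun h => ?_, hgd⟩
  exact hg_le h

end Aux


/-- The second-order subdifferential `∂²f(x₀)(d) = ∂⟨f'(·), d⟩(x₀)`. -/
def secondSubdiff {X : Type*} [NormedAddCommGroup X] [NormedSpace ℝ X]
    (f' : X → X →L[ℝ] ℝ) (x₀ d : X) : Set (X →L[ℝ] ℝ) :=
  clarkeSubdiff (fun x => f' x d) x₀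

set_option maxHeartbeats 1000000 in
/-- Second-order mean value theorem. -/
theorem stmt6 {X : Type*} [NormedAddCommGroup X] [NormedSpace ℝ X] [CompleteSpace X]
    {D : Set X} (hD : IsOpen D) (f : X → ℝ) (f' : X → X →L[ℝ] ℝ)
    (hf : IsC11On f f' D) (a b : X) (ha : a ∈ D) (hb : b ∈ D)
    (hseg : segment ℝ a b ⊆ D) :
    ∃ ξ ∈ openSegment ℝ a b, ∃ L ∈ secondSubdiff f' ξ (b - a),
      f b - f a - f' a (b - a) = (1 / 2) * L (b - a) := by

  by_cases hab : b = a
  · subst hab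
    refine ⟨b, by rw [openSegment_same]; exact Set.mem_singleton _, 0, ?_, by simp⟩
    intro h
    have e : (fun x => f' x (b - b)) = fun _ => (0:ℝ) := by
      funext x; simp
    have : clarkeDeriv (fun x => f' x (b - b)) b h = 0 := by
      rw [e]
      have : (fun p : X × ℝ => ((0:ℝ) - 0) / p.2) = fun _ => (0:ℝ) := by
        funext p; simp
      rw [clarkeDeriv, this, limsup_const]
    simp only [ContinuousLinearMap.zero_apply]
    rw [this]
  -- main case
  set d : X := b - a with hd_def
  have hd : d ≠ 0 := sub_ne_zero.2 hab
  have hseg' : ∀ t ∈ Icc (0:ℝ) 1, a + t • d ∈ D := by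
    intro t ht
    apply hseg
    rw [segment_eq_image']
    exact ⟨t, ht, rfl⟩
  set ψ : X → ℝ := fun x => f' x d with hψ_def
  set φ : ℝ → ℝ := fun t => f' (a + t • d) d with hφ
  set g : ℝ → ℝ := fun t => f (a + t • d) with hg_def
  set r : ℝ := f b - f a - f' a d with hr_def
  -- Step 1 : Rolle for the auxiliary function
  have hg : ∀ t ∈ Icc (0:ℝ) 1, HasDerivAt g (φ t) t := by
    intro t ht
    have h0 := hf.1 (a + t • d) (hseg' t ht) d
    have h0' : HasDerivAt (fun u : ℝ => f (a + t • d + u • d)) (φ t)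
        ((fun u : ℝ => u - t) t) := by
      simpa using h0
    have hi : HasDerivAt (fun u : ℝ => u - t) 1 t := (hasDerivAt_id t).sub_const t
    have h2 := HasDerivAt.comp (h := fun u : ℝ => u - t) t h0' hi
    have e : (fun u : ℝ => f (a + t • d + (u - t) • d)) = g := by
      funext u
      have : a + t • d + (u - t) • d = a + u • d := by rw [sub_smul]; abel
      rw [this]
    rw [show ((fun u : ℝ => f (a + t • d + u • d)) ∘ fun u => u - t)
        = (fun u : ℝ => f (a + t • d + (u - t) • d)) from rfl, e, mul_one] at h2
    exact h2
  have hab' : a + d = b := by rw [hd_def]; abel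
  have g0 : g 0 = f a := by simp [hg_def]
  have g1 : g 1 = f b := by simp [hg_def, hab']
  have φ0 : φ 0 = f' a d := by simp [hφ]
  set h : ℝ → ℝ := fun t => g t - g 0 - t * φ 0 - t ^ 2 * r with hh_def
  have hh : ∀ t ∈ Icc (0:ℝ) 1, HasDerivAt h (φ t - φ 0 - 2 * t * r) t := by
    intro t ht
    have := (((hg t ht).sub_const (g 0)).sub ((hasDerivAt_id t).mul_const (φ 0))).sub
      ((hasDerivAt_pow 2 t).mul_const r)
    exact this.congr_deriv (by push_cast; ring)
  have h01 : h 0 = h 1 := by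
    have e0 : h 0 = 0 := by simp [hh_def]
    have e1 : h 1 = 0 := by
      simp only [hh_def, one_pow, one_mul, g1, g0, φ0]
      rw [hr_def]; ring
    rw [e0, e1]
  have hcont : ContinuousOn h (Icc 0 1) := fun t ht =>
    ((hh t ht).continuousAt).continuousWithinAt
  obtain ⟨τ, hτ, hτ0⟩ := exists_hasDerivAt_eq_zero zero_lt_one hcont h01
    (fun x hx => hh x (Ioo_subset_Icc_self hx))
  -- Step 2 : continuity of ψ on D, hence of φ
  have hψcont : ∀ x ∈ D, ContinuousAt ψ x := by
    intro x hx
    obtain ⟨ε₁, hε₁, K, hK⟩ := hf.2 x hx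
    have hmem : Metric.ball x ε₁ ∩ D ∈ nhds x :=
      inter_mem (Metric.ball_mem_nhds x hε₁) (hD.mem_nhds hx)
    have hf'c : ContinuousAt f' x := hK.continuousOn.continuousAt hmem
    exact ((ContinuousLinearMap.apply ℝ ℝ d).continuous.continuousAt).comp hf'c
  have hφc : ∀ t ∈ Icc (0:ℝ) 1, ContinuousAt φ t := by
    intro t ht
    have h1 : ContinuousAt (fun u : ℝ => a + u • d) t :=
      (continuous_const.add (continuous_id.smul continuous_const)).continuousAt
    exact ContinuousAt.comp (g := ψ) (f := fun u : ℝ => a + u • d) (hψcont _ (hseg' t ht)) h1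
  -- Step 3 : extremum of θ on [0, τ]
  set s : ℝ := 2 * r with hs_def
  set θ : ℝ → ℝ := fun t => φ t - t * s with hθ_def
  have hIccsub : Icc (0:ℝ) τ ⊆ Icc (0:ℝ) 1 :=
    Icc_subset_Icc le_rfl hτ.2.le
  have hθc : ContinuousOn θ (Icc 0 τ) := fun t ht =>
    (((hφc t (hIccsub ht)).sub ((continuous_id.mul continuous_const).continuousAt))).continuousWithinAt
  have hθ0τ : θ τ = θ 0 := by
    simp only [hθ_def, hs_def]
    have : φ τ - φ 0 - 2 * τ * r = 0 := hτ0
    ring_nf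
    ring_nf at this
    linarith
  obtain ⟨c, hc, hloc⟩ : ∃ c ∈ Ioo (0:ℝ) τ,
      (∀ᶠ t in nhds c, θ t ≤ θ c) ∨ (∀ᶠ t in nhds c, θ c ≤ θ t) := by
    obtain ⟨cM, hcM, hmax⟩ := isCompact_Icc.exists_isMaxOn (nonempty_Icc.2 hτ.1.le) hθc
    obtain ⟨cm, hcm, hmin⟩ := isCompact_Icc.exists_isMinOn (nonempty_Icc.2 hτ.1.le) hθc
    by_cases h1 : cM ∈ Ioo (0:ℝ) τ
    · exact ⟨cM, h1, Or.inl (hmax.isLocalMax (Icc_mem_nhds h1.1 h1.2))⟩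
    by_cases h2 : cm ∈ Ioo (0:ℝ) τ
    · exact ⟨cm, h2, Or.inr (hmin.isLocalMin (Icc_mem_nhds h2.1 h2.2))⟩
    -- both extrema at the endpoints, θ is constant
    have hMend : θ cM = θ 0 := by
      rcases ((not_iff_not.2 mem_Ioo).1 h1) |> not_and_or.1 with h | h
      · rw [le_antisymm (not_lt.1 h) hcM.1]
      · rw [le_antisymm hcM.2 (not_lt.1 h), hθ0τ]
    have hmend : θ cm = θ 0 := by
      rcases ((not_iff_not.2 mem_Ioo).1 h2) |> not_and_or.1 with h | h
      · rw [le_antisymm (not_lt.1 h) hcm.1]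
      · rw [le_antisymm hcm.2 (not_lt.1 h), hθ0τ]
    have hconst : ∀ t ∈ Icc (0:ℝ) τ, θ t = θ 0 := by
      intro t ht
      refine le_antisymm ?_ ?_
      · rw [← hMend]; exact hmax ht
      · rw [← hmend]; exact hmin ht
    refine ⟨τ / 2, ⟨half_pos hτ.1, half_lt_self hτ.1⟩, Or.inl ?_⟩
    filter_upwards [Icc_mem_nhds (half_pos hτ.1) (half_lt_self hτ.1)] with t ht
    rw [hconst t ht, hconst (τ / 2) ⟨(half_pos hτ.1).le, (half_lt_self hτ.1).le⟩]
  -- Step 4 : ξ and the local Lipschitz data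
  set ξ : X := a + c • d with hξ_def
  have hcIcc : c ∈ Icc (0:ℝ) 1 := ⟨hc.1.le, (hc.2.trans hτ.2).le⟩
  have hξD : ξ ∈ D := hseg' c hcIcc
  obtain ⟨ε₁, hε₁, K, hK⟩ := hf.2 ξ hξD
  obtain ⟨ε₂, hε₂, hball⟩ := Metric.isOpen_iff.1 hD ξ hξD
  set ε : ℝ := min ε₁ ε₂ with hε_def
  have hε : 0 < ε := lt_min hε₁ hε₂
  set M : ℝ := (K : ℝ) * ‖d‖ with hM_def
  have hM : 0 ≤ M := by positivity
  have hLip : ∀ x ∈ Metric.ball ξ ε, ∀ y ∈ Metric.ball ξ ε, |ψ x - ψ y| ≤ M * ‖x - y‖ := by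
    intro x hx y hy
    have hx1 : x ∈ Metric.ball ξ ε₁ ∩ D :=
      ⟨Metric.ball_subset_ball (min_le_left _ _) hx,
       hball (Metric.ball_subset_ball (min_le_right _ _) hx)⟩
    have hy1 : y ∈ Metric.ball ξ ε₁ ∩ D :=
      ⟨Metric.ball_subset_ball (min_le_left _ _) hy,
       hball (Metric.ball_subset_ball (min_le_right _ _) hy)⟩
    have h1 : ψ x - ψ y = (f' x - f' y) d := by
      simp [hψ_def, ContinuousLinearMap.sub_apply]
    rw [h1]
    calc |(f' x - f' y) d| ≤ ‖f' x - f' y‖ * ‖d‖ := by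
          rw [← Real.norm_eq_abs]; exact (f' x - f' y).le_opNorm d
      _ ≤ (K : ℝ) * ‖x - y‖ * ‖d‖ := by
          have := hK.dist_le_mul x hx1 y hy1
          rw [dist_eq_norm, dist_eq_norm] at this
          exact mul_le_mul_of_nonneg_right this (norm_nonneg d)
      _ = M * ‖x - y‖ := by rw [hM_def]; ring
  -- Step 5 : lower bounds on the Clarke derivative along curves
  have hcurve_base : ∀ u : ℝ, Tendsto (fun l : ℝ => a + (c + u * l) • d)
      (nhdsWithin 0 (Set.Ioi 0)) (nhds ξ) := by
    intro u
    have h1 : ContinuousAt (fun l : ℝ => a + (c + u * l) • d) 0 := by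
      exact (continuous_const.add ((continuous_const.add
        (continuous_const.mul continuous_id)).smul continuous_const)).continuousAt
    have h3 : Tendsto (fun l : ℝ => a + (c + u * l) • d) (nhds 0)
        (nhds (a + (c + u * 0) • d)) := h1.tendsto
    rw [show a + (c + u * 0) • d = ξ by simp [hξ_def]] at h3
    exact h3.mono_left nhdsWithin_le_nhds
  have hφψ : ∀ t : ℝ, ψ (a + t • d) = φ t := fun t => rfl
  have hkey : s ≤ clarkeDeriv ψ ξ d ∧ -s ≤ clarkeDeriv ψ ξ (-d) := by
    rcases hloc with hmax | hmin
    · constructor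
      · -- curve l ↦ (a + (c - l) • d, l), direction d
        refine le_clarkeDeriv_of_curve hε hLip d (m := fun l => (a + (c + (-1) * l) • d, l))
          ((hcurve_base (-1)).prodMk tendsto_id) ?_
        have hev : ∀ᶠ l in nhdsWithin (0:ℝ) (Set.Ioi 0), θ (c - l) ≤ θ c := by
          have ht : Tendsto (fun l : ℝ => c - l) (nhdsWithin 0 (Set.Ioi 0)) (nhds c) := by
            have h1 : Tendsto (fun l : ℝ => c - l) (nhds 0) (nhds (c - 0)) :=
              tendsto_const_nhds.sub tendsto_id
            rw [sub_zero] at h1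
            exact h1.mono_left nhdsWithin_le_nhds
          exact ht.eventually hmax
        filter_upwards [hev, self_mem_nhdsWithin] with l hl hl0
        have hl0' : (0:ℝ) < l := hl0
        show s ≤ (ψ (a + (c + (-1) * l) • d + l • d) - ψ (a + (c + (-1) * l) • d)) / l
        have e1 : a + (c + (-1) * l) • d + l • d = a + c • d := by
          rw [add_smul]; simp; abel
        have e2 : c + (-1) * l = c - l := by ring
        rw [e1, e2, hφψ, hφψ]
        rw [le_div_iff₀ hl0']
        have := hl
        simp only [hθ_def] at this
        nlinarith
      · -- curve l ↦ (a + (c + l) • d, l), direction -d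
        refine le_clarkeDeriv_of_curve hε hLip (-d) (m := fun l => (a + (c + 1 * l) • d, l))
          ((hcurve_base 1).prodMk tendsto_id) ?_
        have hev : ∀ᶠ l in nhdsWithin (0:ℝ) (Set.Ioi 0), θ (c + l) ≤ θ c := by
          have ht : Tendsto (fun l : ℝ => c + l) (nhdsWithin 0 (Set.Ioi 0)) (nhds c) := by
            have h1 : Tendsto (fun l : ℝ => c + l) (nhds 0) (nhds (c + 0)) :=
              tendsto_const_nhds.add tendsto_id
            rw [add_zero] at h1
            exact h1.mono_left nhdsWithin_le_nhds
          exact ht.eventually hmax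
        filter_upwards [hev, self_mem_nhdsWithin] with l hl hl0
        have hl0' : (0:ℝ) < l := hl0
        show -s ≤ (ψ (a + (c + 1 * l) • d + l • (-d)) - ψ (a + (c + 1 * l) • d)) / l
        have e1 : a + (c + 1 * l) • d + l • (-d) = a + c • d := by
          rw [add_smul, smul_neg]; simp; abel
        have e2 : c + 1 * l = c + l := by ring
        rw [e1, e2, hφψ, hφψ]
        rw [le_div_iff₀ hl0']
        have := hl
        simp only [hθ_def] at this
        nlinarith
    · constructor
      · -- curve l ↦ (ξ, l), direction d
        refine le_clarkeDeriv_of_curve hε hLip d (m := fun l => (a + (c + 0 * l) • d, l))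
          ((hcurve_base 0).prodMk tendsto_id) ?_
        have hev : ∀ᶠ l in nhdsWithin (0:ℝ) (Set.Ioi 0), θ c ≤ θ (c + l) := by
          have ht : Tendsto (fun l : ℝ => c + l) (nhdsWithin 0 (Set.Ioi 0)) (nhds c) := by
            have h1 : Tendsto (fun l : ℝ => c + l) (nhds 0) (nhds (c + 0)) :=
              tendsto_const_nhds.add tendsto_id
            rw [add_zero] at h1
            exact h1.mono_left nhdsWithin_le_nhds
          exact ht.eventually hmin
        filter_upwards [hev, self_mem_nhdsWithin] with l hl hl0
        have hl0' : (0:ℝ) < l := hl0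
        show s ≤ (ψ (a + (c + 0 * l) • d + l • d) - ψ (a + (c + 0 * l) • d)) / l
        have e2 : c + 0 * l = c := by ring
        rw [e2]
        have e1 : a + c • d + l • d = a + (c + l) • d := by rw [add_smul]; abel
        rw [e1, hφψ, hφψ]
        rw [le_div_iff₀ hl0']
        have := hl
        simp only [hθ_def] at this
        nlinarith
      · -- curve l ↦ (ξ, l), direction -d
        refine le_clarkeDeriv_of_curve hε hLip (-d) (m := fun l => (a + (c + 0 * l) • d, l))
          ((hcurve_base 0).prodMk tendsto_id) ?_
        have hev : ∀ᶠ l in nhdsWithin (0:ℝ) (Set.Ioi 0), θ c ≤ θ (c - l) := by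
          have ht : Tendsto (fun l : ℝ => c - l) (nhdsWithin 0 (Set.Ioi 0)) (nhds c) := by
            have h1 : Tendsto (fun l : ℝ => c - l) (nhds 0) (nhds (c - 0)) :=
              tendsto_const_nhds.sub tendsto_id
            rw [sub_zero] at h1
            exact h1.mono_left nhdsWithin_le_nhds
          exact ht.eventually hmin
        filter_upwards [hev, self_mem_nhdsWithin] with l hl hl0
        have hl0' : (0:ℝ) < l := hl0
        show -s ≤ (ψ (a + (c + 0 * l) • d + l • (-d)) - ψ (a + (c + 0 * l) • d)) / l
        have e2 : c + 0 * l = c := by ring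
        rw [e2]
        have e1 : a + c • d + l • (-d) = a + (c - l) • d := by
          rw [sub_smul, smul_neg]; abel
        rw [e1, hφψ, hφψ]
        rw [le_div_iff₀ hl0']
        have := hl
        simp only [hθ_def] at this
        nlinarith
  -- Step 6 : conclude via Hahn–Banach
  obtain ⟨L, hL, hLd⟩ := exists_clarke_elem hε hM hLip hd hkey.1 hkey.2
  refine ⟨ξ, ?_, L, hL, ?_⟩
  · rw [openSegment_eq_image']
    exact ⟨c, ⟨hc.1, hc.2.trans hτ.2⟩, rfl⟩
  · rw [hLd, hs_def]
    ring
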